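/- With notation as in the Mindlin–Reissner setting, the vector τ₃ = (−k_x/k, k_y/k, 0)ᵀ is an eigenvector of the 3×3 dispersion matrix B_b with eigenvalue f(k,ω) = (ρh³/12)ω² − D(1−ν)/2·k² − b²κhG. -/

import Mathlib

open Matrix Complex

/-- τ₃ = (−k_x/k, k_y/k, 0)ᵀ is an eigenvector of the Mindlin–Reissner dispersion
matrix B_b with eigenvalue f(k,ω) = (ρh³/12)ω² − D(1−ν)/2·k² − b²κhG. -/
theorem mindlin_reissner_tau3_eigenvector
    (ρ h D ν κ G b ω kx ky k : ℝ)
    (hk : 0 < kx ^ 2 + ky ^ 2) (hkdef : k = Real.sqrt (kx ^ 2 + ky ^ 2)) :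
    (!![(((ρ * h ^ 3 / 12) * ω ^ 2 - κ * h * G * b ^ 2
            - D * ((1 - ν) / 2 * kx ^ 2 + ky ^ 2) : ℝ) : ℂ),
        ((-(D * (1 + ν) / 2) * kx * ky : ℝ) : ℂ),
        -Complex.I * (b * κ * h * G * ky : ℝ);
        ((-(D * (1 + ν) / 2) * kx * ky : ℝ) : ℂ),
        (((ρ * h ^ 3 / 12) * ω ^ 2 - κ * h * G * b ^ 2
            - D * ((1 - ν) / 2 * ky ^ 2 + kx ^ 2) : ℝ) : ℂ),
        -Complex.I * (b * κ * h * G * kx : ℝ);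
        Complex.I * (b * κ * h * G * ky : ℝ),
        Complex.I * (b * κ * h * G * kx : ℝ),
        ((h * (ρ * ω ^ 2 - κ * G * k ^ 2) : ℝ) : ℂ)] : Matrix (Fin 3) (Fin 3) ℂ)
      *ᵥ ![((-(kx / k) : ℝ) : ℂ), ((ky / k : ℝ) : ℂ), 0]
    = (((ρ * h ^ 3 / 12) * ω ^ 2 - D * (1 - ν) / 2 * k ^ 2
          - b ^ 2 * κ * h * G : ℝ) : ℂ)
        • ![((-(kx / k) : ℝ) : ℂ), ((ky / k : ℝ) : ℂ), 0] := by
  have hk2 : k ^ 2 = kx ^ 2 + ky ^ 2 := by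
    rw [hkdef, Real.sq_sqrt hk.le]
  have hkne : k ≠ 0 := by
    intro h0; rw [h0] at hk2; simp at hk2; nlinarith
  have hk2c : (k : ℂ) ^ 2 = (kx : ℂ) ^ 2 + (ky : ℂ) ^ 2 := by exact_mod_cast congrArg (Complex.ofReal) hk2
  funext i
  fin_cases i <;>
    simp [mulVec, dotProduct, Fin.sum_univ_succ] <;>
    push_cast <;> field_simp <;>
    first
      | (rw [hk2c]; ring)
      | (left; ring)
      | ring
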